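/- arXiv:1701.07701 — 7 statements merged into one kernel-verified Lean document; each statement's English description precedes it below -/
import Mathlib

section
/- Let ((Q,·),E) be an L-groupoid and p ∈ L. Then the cut μ_p = {x : E(x,x) ≥ p} is a subgroupoid of (Q,·), and the cut E_p = {(x,y) : E(x,y) ≥ p} is a congruence relation on μ_p (an equivalence relation on μ_p compatible with the operation ·). -/
/-- For an `L`-groupoid `((Q,·),E)` and `p ∈ L`, the cut `μ_p` is a
subgroupoid, and the cut `E_p` is a congruence on `μ_p`: an equivalence
relation on `μ_p` compatible with the operation. -/
theorem cut_congruence {Q L : Type*} [CompleteLattice L]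
    (mul : Q → Q → Q) (E : Q → Q → L)
    (hsym : ∀ x y, E x y = E y x)
    (htr : ∀ x y z, E x z ⊓ E z y ≤ E x y)
    (hsep : ∀ x y, E x y = ⊤ → x = y)
    (hcomp : ∀ a b c d, E a b ⊓ E c d ≤ E (mul a c) (mul b d)) (p : L) :
    (∀ a b : Q, p ≤ E a a → p ≤ E b b → p ≤ E (mul a b) (mul a b)) ∧
    Equivalence (fun a b : {x : Q // p ≤ E x x} => p ≤ E a.1 b.1) ∧
    (∀ a b c d : Q, p ≤ E a b → p ≤ E c d → p ≤ E (mul a c) (mul b d)) := by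
  refine ⟨fun a b ha hb => le_trans (le_inf ha hb) (hcomp a a b b),
    ⟨fun a => a.2, ?_, ?_⟩,
    fun a b c d hab hcd => le_trans (le_inf hab hcd) (hcomp a b c d)⟩
  · intro a b h; rw [hsym]; exact h
  · intro a b c h1 h2; exact le_trans (le_inf h1 h2) (htr a.1 c.1 b.1)
end

section
/- If an identity u(x₁,…,xₙ) ≈ v(x₁,…,xₙ) holds in the groupoid (Q,·), then it holds in the L-groupoid ((Q,·),E): for all a₁,…,aₙ ∈ Q, μ(a₁) ∧ … ∧ μ(aₙ) ≤ E(u(a₁,…,aₙ), v(a₁,…,aₙ)), where μ(x) = E(x,x). -/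
/-- Groupoid terms in `n` variables. -/
inductive GroupoidTerm (n : ℕ) : Type
  | var : Fin n → GroupoidTerm n
  | mul : GroupoidTerm n → GroupoidTerm n → GroupoidTerm n

/-- Evaluation of a term under an assignment of the variables. -/
def GroupoidTerm.eval {α : Type*} (m : α → α → α) {n : ℕ} (a : Fin n → α) :
    GroupoidTerm n → α
  | .var i => a i
  | .mul t₁ t₂ => m (t₁.eval m a) (t₂.eval m a)

/-- If an identity `u ≈ v` holds classically in the groupoid `(Q,·)`, then it
holds in the `L`-groupoid `((Q,·),E)`. -/
theorem identity_lifts {Q L : Type*} [CompleteLattice L]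
    (mul : Q → Q → Q) (E : Q → Q → L)
    (hsym : ∀ x y, E x y = E y x)
    (htr : ∀ x y z, E x z ⊓ E z y ≤ E x y)
    (hsep : ∀ x y, E x y = ⊤ → x = y)
    (hcomp : ∀ a b c d, E a b ⊓ E c d ≤ E (mul a c) (mul b d))
    {n : ℕ} (u v : GroupoidTerm n)
    (hid : ∀ a : Fin n → Q, u.eval mul a = v.eval mul a) :
    ∀ a : Fin n → Q, (⨅ i, E (a i) (a i)) ≤ E (u.eval mul a) (v.eval mul a) := by
  intro a
  rw [hid]
  clear hid u
  induction v with
  | var i => exact iInf_le _ i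
  | mul t₁ t₂ ih₁ ih₂ =>
    exact le_trans (le_inf ih₁ ih₂) (hcomp _ _ _ _)
end

section
/- Let ((Q,·),E) be an L-groupoid and u ≈ v an identity in the language of groupoids. Then ((Q,·),E) satisfies u ≈ v (in the sense that μ(a₁) ∧ … ∧ μ(aₙ) ≤ E(u(ā), v(ā)) for all tuples ā) if and only if for every p ∈ L, the quotient groupoid μ_p / E_p satisfies u ≈ v classically. -/
/-- The `p`-cut `μ_p` with the equivalence relation `E_p`. -/
def cutSetoid {Q L : Type*} [CompleteLattice L] (E : Q → Q → L)
    (hsym : ∀ x y, E x y = E y x)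
    (htr : ∀ x y z, E x z ⊓ E z y ≤ E x y) (p : L) :
    Setoid {x : Q // p ≤ E x x} where
  r a b := p ≤ E a.1 b.1
  iseqv := ⟨fun a => a.2, fun {a b} h => hsym a.1 b.1 ▸ h,
    fun {a b c} h1 h2 => le_trans (le_inf h1 h2) (htr a.1 c.1 b.1)⟩

/-- The operation induced on the quotient `μ_p / E_p`. -/
def qop {Q L : Type*} [CompleteLattice L] (op : Q → Q → Q) (E : Q → Q → L)
    (hsym : ∀ x y, E x y = E y x)
    (htr : ∀ x y z, E x z ⊓ E z y ≤ E x y)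
    (hcomp : ∀ a b c d, E a b ⊓ E c d ≤ E (op a c) (op b d)) (p : L) :
    Quotient (cutSetoid E hsym htr p) → Quotient (cutSetoid E hsym htr p) →
      Quotient (cutSetoid E hsym htr p) :=
  Quotient.lift₂
    (fun a b => Quotient.mk (cutSetoid E hsym htr p)
      ⟨op a.1 b.1, le_trans (le_inf a.2 b.2) (hcomp a.1 a.1 b.1 b.1)⟩)
    (fun a b a' b' ha hb => Quotient.sound
      (le_trans (le_inf ha hb) (hcomp a.1 a'.1 b.1 b'.1)))

theorem eval_refl_le {Q L : Type*} [CompleteLattice L]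
    (mul : Q → Q → Q) (E : Q → Q → L)
    (hcomp : ∀ a b c d, E a b ⊓ E c d ≤ E (mul a c) (mul b d))
    {n : ℕ} (a : Fin n → Q) (t : GroupoidTerm n) :
    (⨅ i, E (a i) (a i)) ≤ E (t.eval mul a) (t.eval mul a) := by
  induction t with
  | var i => exact iInf_le _ i
  | mul t₁ t₂ ih₁ ih₂ =>
    exact le_trans (le_inf ih₁ ih₂) (hcomp _ _ _ _)

theorem eval_mk {Q L : Type*} [CompleteLattice L]
    (mul : Q → Q → Q) (E : Q → Q → L)
    (hsym : ∀ x y, E x y = E y x)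
    (htr : ∀ x y z, E x z ⊓ E z y ≤ E x y)
    (hcomp : ∀ a b c d, E a b ⊓ E c d ≤ E (mul a c) (mul b d))
    (p : L) {n : ℕ} (a : Fin n → {x : Q // p ≤ E x x}) (t : GroupoidTerm n)
    (h : p ≤ E (t.eval mul (fun i => (a i).1)) (t.eval mul (fun i => (a i).1))) :
    t.eval (qop mul E hsym htr hcomp p)
        (fun i => Quotient.mk (cutSetoid E hsym htr p) (a i)) =
      Quotient.mk (cutSetoid E hsym htr p) ⟨t.eval mul (fun i => (a i).1), h⟩ := by
  induction t with
  | var i => rfl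
  | mul t₁ t₂ ih₁ ih₂ =>
    have h₁ : p ≤ E (t₁.eval mul (fun i => (a i).1)) (t₁.eval mul (fun i => (a i).1)) :=
      le_trans (le_iInf fun i => (a i).2) (eval_refl_le mul E hcomp _ t₁)
    have h₂ : p ≤ E (t₂.eval mul (fun i => (a i).1)) (t₂.eval mul (fun i => (a i).1)) :=
      le_trans (le_iInf fun i => (a i).2) (eval_refl_le mul E hcomp _ t₂)
    show qop mul E hsym htr hcomp p _ _ = _
    rw [ih₁ h₁, ih₂ h₂]
    rfl

/-- An `L`-groupoid satisfies an identity `u ≈ v` if and only if for every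
`p ∈ L` the quotient groupoid `μ_p / E_p` satisfies `u ≈ v` classically. -/
theorem identity_iff_cut_quotients {Q L : Type*} [CompleteLattice L]
    (mul : Q → Q → Q) (E : Q → Q → L)
    (hsym : ∀ x y, E x y = E y x)
    (htr : ∀ x y z, E x z ⊓ E z y ≤ E x y)
    (hsep : ∀ x y, E x y = ⊤ → x = y)
    (hcomp : ∀ a b c d, E a b ⊓ E c d ≤ E (mul a c) (mul b d))
    {n : ℕ} (u v : GroupoidTerm n) :
    (∀ a : Fin n → Q,
        (⨅ i, E (a i) (a i)) ≤ E (u.eval mul a) (v.eval mul a)) ↔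
    (∀ p : L, ∀ A : Fin n → Quotient (cutSetoid E hsym htr p),
        u.eval (qop mul E hsym htr hcomp p) A =
          v.eval (qop mul E hsym htr hcomp p) A) := by
  constructor
  · intro H p A
    have hA : ∀ i, ∃ a : {x : Q // p ≤ E x x},
        A i = Quotient.mk (cutSetoid E hsym htr p) a := fun i => (A i).exists_rep.imp
      (fun a h => h.symm)
    choose a ha using hA
    have hp : p ≤ ⨅ i, E (a i).1 (a i).1 := le_iInf fun i => (a i).2
    have hu : p ≤ E (u.eval mul (fun i => (a i).1)) (u.eval mul (fun i => (a i).1)) :=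
      le_trans hp (eval_refl_le mul E hcomp _ u)
    have hv : p ≤ E (v.eval mul (fun i => (a i).1)) (v.eval mul (fun i => (a i).1)) :=
      le_trans hp (eval_refl_le mul E hcomp _ v)
    have : A = fun i => Quotient.mk (cutSetoid E hsym htr p) (a i) := funext ha
    rw [this, eval_mk mul E hsym htr hcomp p a u hu, eval_mk mul E hsym htr hcomp p a v hv]
    exact Quotient.sound (le_trans hp (H _))
  · intro H a
    set p : L := ⨅ i, E (a i) (a i) with hp
    have ha : ∀ i, p ≤ E (a i) (a i) := fun i => iInf_le _ i
    have hu : p ≤ E (u.eval mul a) (u.eval mul a) := eval_refl_le mul E hcomp a u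
    have hv : p ≤ E (v.eval mul a) (v.eval mul a) := eval_refl_le mul E hcomp a v
    have key := H p (fun i => Quotient.mk (cutSetoid E hsym htr p) ⟨a i, ha i⟩)
    rw [eval_mk mul E hsym htr hcomp p (fun i => ⟨a i, ha i⟩) u hu,
        eval_mk mul E hsym htr hcomp p (fun i => ⟨a i, ha i⟩) v hv] at key
    exact Quotient.exact key
end

section
/- Let ((Q,·),E) be an L-groupoid such that every equation a·x = b and y·a = b (a,b ∈ Q) is E-uniquely solvable. Then for every p ∈ L, the quotient groupoid μ_p / E_p is a quasigroup: for all classes A,B in μ_p/E_p, the equations A·X = B and Y·A = B have unique solutions. -/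
/-- If in an `L`-groupoid every linear equation `a·x = b` and `y·a = b` is
`E`-uniquely solvable, then every quotient groupoid `μ_p / E_p` is a
quasigroup. -/
theorem cut_quotients_quasigroup {Q L : Type*} [CompleteLattice L]
    (mul : Q → Q → Q) (E : Q → Q → L)
    (hsym : ∀ x y, E x y = E y x)
    (htr : ∀ x y z, E x z ⊓ E z y ≤ E x y)
    (hsep : ∀ x y, E x y = ⊤ → x = y)
    (hcomp : ∀ a b c d, E a b ⊓ E c d ≤ E (mul a c) (mul b d))
    (hleft : ∀ a b : Q, ∃ c : Q,
      (E a a ⊓ E b b ≤ E c c ⊓ E (mul a c) b) ∧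
      ∀ (c₁ : Q) (p : L), p ≤ E a a ⊓ E b b → p ≤ E (mul a c₁) b → p ≤ E c c₁)
    (hright : ∀ a b : Q, ∃ d : Q,
      (E a a ⊓ E b b ≤ E d d ⊓ E (mul d a) b) ∧
      ∀ (d₁ : Q) (p : L), p ≤ E a a ⊓ E b b → p ≤ E (mul d₁ a) b → p ≤ E d d₁) :
    ∀ p : L, ∀ A B : Quotient (cutSetoid E hsym htr p),
      (∃! X, qop mul E hsym htr hcomp p A X = B) ∧
      (∃! Y, qop mul E hsym htr hcomp p Y A = B) := by
  intro p A B
  refine Quotient.inductionOn₂ A B ?_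
  intro a b
  have hab : p ≤ E a.1 a.1 ⊓ E b.1 b.1 := le_inf a.2 b.2
  constructor
  · obtain ⟨c, h1, h2⟩ := hleft a.1 b.1
    have hc : p ≤ E c c := le_trans hab (le_trans h1 inf_le_left)
    have hacb : p ≤ E (mul a.1 c) b.1 := le_trans hab (le_trans h1 inf_le_right)
    refine ⟨Quotient.mk _ ⟨c, hc⟩, Quotient.sound hacb, ?_⟩
    intro X hX
    refine Quotient.inductionOn X (fun c₁ hX => ?_) hX
    have h3 : p ≤ E (mul a.1 c₁.1) b.1 := Quotient.exact hX
    exact (Quotient.sound (h2 c₁.1 p hab h3)).symm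
  · obtain ⟨d, h1, h2⟩ := hright a.1 b.1
    have hd : p ≤ E d d := le_trans hab (le_trans h1 inf_le_left)
    have hdab : p ≤ E (mul d a.1) b.1 := le_trans hab (le_trans h1 inf_le_right)
    refine ⟨Quotient.mk _ ⟨d, hd⟩, Quotient.sound hdab, ?_⟩
    intro Y hY
    refine Quotient.inductionOn Y (fun d₁ hY => ?_) hY
    have h3 : p ≤ E (mul d₁.1 a.1) b.1 := Quotient.exact hY
    exact (Quotient.sound (h2 d₁.1 p hab h3)).symm
end

section
/- If ((Q,·,\,/),E) is an L-equasigroup, then for every p ∈ L the quotient algebra μ_p / E_p is a classical equasigroup, i.e., it satisfies the identities y = x·(x\y), y = x\(x·y), y = (y/x)·x, and y = (y·x)/x. -/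
/-- If `((Q,·,\,/),E)` is an `L`-equasigroup, then every quotient algebra
`μ_p / E_p` is a classical equasigroup, i.e. it satisfies the identities
`y = x·(x\y)`, `y = x\(x·y)`, `y = (y/x)·x` and `y = (y·x)/x`. -/
theorem Lequasigroup_cut_quotients {Q L : Type*} [CompleteLattice L]
    (mul ld rd : Q → Q → Q) (E : Q → Q → L)
    (hsym : ∀ x y, E x y = E y x)
    (htr : ∀ x y z, E x z ⊓ E z y ≤ E x y)
    (hsep : ∀ x y, E x y = ⊤ → x = y)
    (hcm : ∀ a b c d, E a b ⊓ E c d ≤ E (mul a c) (mul b d))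
    (hcl : ∀ a b c d, E a b ⊓ E c d ≤ E (ld a c) (ld b d))
    (hcr : ∀ a b c d, E a b ⊓ E c d ≤ E (rd a c) (rd b d))
    (hQE1 : ∀ x y, E x x ⊓ E y y ≤ E y (mul x (ld x y)))
    (hQE2 : ∀ x y, E x x ⊓ E y y ≤ E y (ld x (mul x y)))
    (hQE3 : ∀ x y, E x x ⊓ E y y ≤ E y (mul (rd y x) x))
    (hQE4 : ∀ x y, E x x ⊓ E y y ≤ E y (rd (mul y x) x)) :
    ∀ p : L, ∀ X Y : Quotient (cutSetoid E hsym htr p),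
      Y = qop mul E hsym htr hcm p X (qop ld E hsym htr hcl p X Y) ∧
      Y = qop ld E hsym htr hcl p X (qop mul E hsym htr hcm p X Y) ∧
      Y = qop mul E hsym htr hcm p (qop rd E hsym htr hcr p Y X) X ∧
      Y = qop rd E hsym htr hcr p (qop mul E hsym htr hcm p Y X) X := by
  intro p X Y
  refine Quotient.inductionOn₂ X Y fun x y => ?_
  exact ⟨Quotient.sound (le_trans (le_inf x.2 y.2) (hQE1 x.1 y.1)),
    Quotient.sound (le_trans (le_inf x.2 y.2) (hQE2 x.1 y.1)),
    Quotient.sound (le_trans (le_inf x.2 y.2) (hQE3 x.1 y.1)),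
    Quotient.sound (le_trans (le_inf x.2 y.2) (hQE4 x.1 y.1))⟩
end

section
/- Let ((Q,·),E) be an L-quasigroup. Then (assuming the Axiom of Choice) there exist binary operations \ and / on Q such that ((Q,·,\,/),E) is an L-equasigroup; in particular E is compatible with \ and / and the conditions QE1–QE4 hold. -/
/-- If `((Q,·),E)` is an `L`-quasigroup, then (using the Axiom of Choice)
there exist binary operations `\` and `/` on `Q` such that `((Q,·,\,/),E)` is
an `L`-equasigroup: `E` is compatible with `\` and `/`, and QE1–QE4 hold. -/
theorem Lquasigroup_to_Lequasigroup {Q L : Type*} [CompleteLattice L]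
    (mul : Q → Q → Q) (E : Q → Q → L)
    (hsym : ∀ x y, E x y = E y x)
    (htr : ∀ x y z, E x z ⊓ E z y ≤ E x y)
    (hsep : ∀ x y, E x y = ⊤ → x = y)
    (hcm : ∀ a b c d, E a b ⊓ E c d ≤ E (mul a c) (mul b d))
    (hleft : ∀ a b : Q, ∃ c : Q,
      (E a a ⊓ E b b ≤ E c c ⊓ E (mul a c) b) ∧
      ∀ (c₁ : Q) (p : L), p ≤ E a a ⊓ E b b → p ≤ E (mul a c₁) b → p ≤ E c c₁)
    (hright : ∀ a b : Q, ∃ d : Q,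
      (E a a ⊓ E b b ≤ E d d ⊓ E (mul d a) b) ∧
      ∀ (d₁ : Q) (p : L), p ≤ E a a ⊓ E b b → p ≤ E (mul d₁ a) b → p ≤ E d d₁) :
    ∃ ld rd : Q → Q → Q,
      (∀ a b c d, E a b ⊓ E c d ≤ E (ld a c) (ld b d)) ∧
      (∀ a b c d, E a b ⊓ E c d ≤ E (rd a c) (rd b d)) ∧
      (∀ x y, E x x ⊓ E y y ≤ E y (mul x (ld x y))) ∧
      (∀ x y, E x x ⊓ E y y ≤ E y (ld x (mul x y))) ∧
      (∀ x y, E x x ⊓ E y y ≤ E y (mul (rd y x) x)) ∧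
      (∀ x y, E x x ⊓ E y y ≤ E y (rd (mul y x) x)) := by
  -- E x y ≤ E x x
  have hmu : ∀ a b : Q, E a b ≤ E a a := by
    intro a b
    have h := htr a a b
    calc E a b = E a b ⊓ E b a := by rw [hsym b a, inf_idem]
    _ ≤ E a a := h
  -- transitivity helper
  have tr : ∀ (p : L) (x y z : Q), p ≤ E x z → p ≤ E z y → p ≤ E x y := by
    intro p x y z h1 h2
    exact le_trans (le_inf h1 h2) (htr x y z)
  choose ld hld huld using hleft
  choose rd hrd hurd using hright
  refine ⟨ld, fun a b => rd b a, ?_, ?_, ?_, ?_, ?_, ?_⟩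
  · -- compatibility of ld
    intro a b c d
    set p := E a b ⊓ E c d with hp
    have pab : p ≤ E a b := inf_le_left
    have pcd : p ≤ E c d := inf_le_right
    have pa : p ≤ E a a := le_trans pab (hmu a b)
    have pb : p ≤ E b b := le_trans pab (by rw [hsym]; exact hmu b a)
    have pc : p ≤ E c c := le_trans pcd (hmu c d)
    have pd : p ≤ E d d := le_trans pcd (by rw [hsym]; exact hmu d c)
    have hbd := hld b d
    have pc2 : p ≤ E (ld b d) (ld b d) :=
      le_trans (le_inf pb pd) (le_trans hbd inf_le_left)
    have pbc2d : p ≤ E (mul b (ld b d)) d :=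
      le_trans (le_inf pb pd) (le_trans hbd inf_le_right)
    have pac2 : p ≤ E (mul a (ld b d)) (mul b (ld b d)) :=
      le_trans (le_inf pab pc2) (hcm a b (ld b d) (ld b d))
    have p1 : p ≤ E (mul a (ld b d)) d := tr p _ _ _ pac2 pbc2d
    have p2 : p ≤ E (mul a (ld b d)) c := tr p _ _ _ p1 (by rw [hsym]; exact pcd)
    exact huld a c (ld b d) p (le_inf pa pc) p2
  · -- compatibility of rd
    intro a b c d
    set p := E a b ⊓ E c d with hp
    have pab : p ≤ E a b := inf_le_left
    have pcd : p ≤ E c d := inf_le_right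
    have pa : p ≤ E a a := le_trans pab (hmu a b)
    have pb : p ≤ E b b := le_trans pab (by rw [hsym]; exact hmu b a)
    have pc : p ≤ E c c := le_trans pcd (hmu c d)
    have pd : p ≤ E d d := le_trans pcd (by rw [hsym]; exact hmu d c)
    have hdb := hrd d b
    have pr : p ≤ E (rd d b) (rd d b) :=
      le_trans (le_inf pd pb) (le_trans hdb inf_le_left)
    have prdb : p ≤ E (mul (rd d b) d) b :=
      le_trans (le_inf pd pb) (le_trans hdb inf_le_right)
    have prc : p ≤ E (mul (rd d b) c) (mul (rd d b) d) :=
      le_trans (le_inf pr pcd) (hcm (rd d b) (rd d b) c d)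
    have p1 : p ≤ E (mul (rd d b) c) b := tr p _ _ _ prc prdb
    have p2 : p ≤ E (mul (rd d b) c) a := tr p _ _ _ p1 (by rw [hsym]; exact pab)
    exact hurd c a (rd d b) p (le_inf pc pa) p2
  · -- QE1
    intro x y
    rw [hsym y (mul x (ld x y))]
    exact le_trans (hld x y) inf_le_right
  · -- QE2
    intro x y
    set p := E x x ⊓ E y y with hp
    have pxy : p ≤ E (mul x y) (mul x y) :=
      le_trans (le_inf inf_le_left inf_le_right) (hcm x x y y)
    have h := huld x (mul x y) y p (le_inf inf_le_left pxy) pxy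
    rw [hsym]; exact h
  · -- QE3
    intro x y
    show E x x ⊓ E y y ≤ E y (mul (rd x y) x)
    have h := le_trans (hrd x y) inf_le_right
    rw [hsym y (mul (rd x y) x)]; exact h
  · -- QE4
    intro x y
    set p := E x x ⊓ E y y with hp
    have pyx : p ≤ E (mul y x) (mul y x) :=
      le_trans (le_inf inf_le_right inf_le_left) (hcm y y x x)
    show p ≤ E y (rd x (mul y x))
    have h := hurd x (mul y x) y p (le_inf inf_le_left pyx) pyx
    rw [hsym]; exact h
end

section
/- An L-algebra ((G,·,⁻¹,e),E) is an L-group (i.e., satisfies LG1, LG2, LG3) if and only if for every p ∈ L, the quotient algebra μ_p/E_p is a group. -/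
/-- The unary operation induced on the quotient `μ_p / E_p` by a unary
operation compatible with `E`. -/
def qinv {Q L : Type*} [CompleteLattice L] (inv : Q → Q) (E : Q → Q → L)
    (hsym : ∀ x y, E x y = E y x)
    (htr : ∀ x y z, E x z ⊓ E z y ≤ E x y)
    (hci : ∀ a b, E a b ≤ E (inv a) (inv b)) (p : L) :
    Quotient (cutSetoid E hsym htr p) → Quotient (cutSetoid E hsym htr p) :=
  Quotient.lift
    (fun a => Quotient.mk (cutSetoid E hsym htr p)
      ⟨inv a.1, le_trans a.2 (hci a.1 a.1)⟩)
    (fun a a' ha => Quotient.sound (le_trans ha (hci a.1 a'.1)))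

/-- An `L`-algebra `((G,·,⁻¹,e),E)` is an `L`-group (LG1, LG2, LG3 hold) if
and only if every quotient algebra `μ_p / E_p` is a group. -/
theorem Lgroup_iff_cut_quotients_group {G L : Type*} [CompleteLattice L]
    (mul : G → G → G) (inv : G → G) (e : G) (E : G → G → L)
    (hsym : ∀ x y, E x y = E y x)
    (htr : ∀ x y z, E x z ⊓ E z y ≤ E x y)
    (hsep : ∀ x y, E x y = ⊤ → x = y)
    (hcm : ∀ a b c d, E a b ⊓ E c d ≤ E (mul a c) (mul b d))
    (hci : ∀ a b, E a b ≤ E (inv a) (inv b))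
    (he : E e e = ⊤) :
    ((∀ x y z, E x x ⊓ E y y ⊓ E z z ≤ E (mul x (mul y z)) (mul (mul x y) z)) ∧
     (∀ x, E x x ≤ E (mul x e) x) ∧ (∀ x, E x x ≤ E (mul e x) x) ∧
     (∀ x, E x x ≤ E (mul x (inv x)) e) ∧ (∀ x, E x x ≤ E (mul (inv x) x) e)) ↔
    (∀ p : L, ∀ X Y Z : Quotient (cutSetoid E hsym htr p),
      qop mul E hsym htr hcm p X (qop mul E hsym htr hcm p Y Z) =
        qop mul E hsym htr hcm p (qop mul E hsym htr hcm p X Y) Z ∧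
      qop mul E hsym htr hcm p X
          (Quotient.mk _ ⟨e, le_top.trans he.ge⟩) = X ∧
      qop mul E hsym htr hcm p (Quotient.mk _ ⟨e, le_top.trans he.ge⟩) X = X ∧
      qop mul E hsym htr hcm p X (qinv inv E hsym htr hci p X) =
        Quotient.mk _ ⟨e, le_top.trans he.ge⟩ ∧
      qop mul E hsym htr hcm p (qinv inv E hsym htr hci p X) X =
        Quotient.mk _ ⟨e, le_top.trans he.ge⟩) := by
  constructor
  · rintro ⟨h1, h2, h3, h4, h5⟩ p X Y Z
    induction X using Quotient.ind with | _ x =>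
    induction Y using Quotient.ind with | _ y =>
    induction Z using Quotient.ind with | _ z =>
    refine ⟨Quotient.sound ?_, Quotient.sound ?_, Quotient.sound ?_,
      Quotient.sound ?_, Quotient.sound ?_⟩
    · exact le_trans (le_inf (le_inf x.2 y.2) z.2) (h1 x.1 y.1 z.1)
    · exact le_trans x.2 (h2 x.1)
    · exact le_trans x.2 (h3 x.1)
    · exact le_trans x.2 (h4 x.1)
    · exact le_trans x.2 (h5 x.1)
  · intro h
    refine ⟨fun x y z => ?_, fun x => ?_, fun x => ?_, fun x => ?_, fun x => ?_⟩
    · set p := E x x ⊓ E y y ⊓ E z z with hp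
      exact Quotient.exact ((h p
        (Quotient.mk _ ⟨x, inf_le_left.trans inf_le_left⟩)
        (Quotient.mk _ ⟨y, inf_le_left.trans inf_le_right⟩)
        (Quotient.mk _ ⟨z, inf_le_right⟩)).1)
    · exact Quotient.exact ((h (E x x) (Quotient.mk _ ⟨x, le_rfl⟩)
        (Quotient.mk _ ⟨x, le_rfl⟩) (Quotient.mk _ ⟨x, le_rfl⟩)).2.1)
    · exact Quotient.exact ((h (E x x) (Quotient.mk _ ⟨x, le_rfl⟩)
        (Quotient.mk _ ⟨x, le_rfl⟩) (Quotient.mk _ ⟨x, le_rfl⟩)).2.2.1)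
    · exact Quotient.exact ((h (E x x) (Quotient.mk _ ⟨x, le_rfl⟩)
        (Quotient.mk _ ⟨x, le_rfl⟩) (Quotient.mk _ ⟨x, le_rfl⟩)).2.2.2.1)
    · exact Quotient.exact ((h (E x x) (Quotient.mk _ ⟨x, le_rfl⟩)
        (Quotient.mk _ ⟨x, le_rfl⟩) (Quotient.mk _ ⟨x, le_rfl⟩)).2.2.2.2)
end
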